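/- Let A = [[M, N], [N*, P]] be a 2n×2n Hermitian positive definite matrix with n×n blocks. Then the Schur complement S = M - N·P⁻¹·N* is Hermitian positive definite, and its eigenvalues interlace those of A: λ_k(A) ≤ λ_k(S) ≤ λ_{k+n}(A) for k = 1, …, n. -/

import Mathlib

open Matrix ComplexOrder

/-- Eigenvalues of a Hermitian matrix listed in increasing order. -/
noncomputable def sortedEigs {m : ℕ} {𝕜 : Type*} [RCLike 𝕜] {A : Matrix (Fin m) (Fin m) 𝕜}
    (hA : A.IsHermitian) : Fin m → ℝ :=
  hA.eigenvalues ∘ Tuple.sort hA.eigenvalues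

section Aux
open Finset

noncomputable section
namespace Interlace

variable {m p : ℕ}

abbrev E (m : ℕ) := EuclideanSpace ℂ (Fin m)

def tf {m : ℕ} (x : E m) : Fin m → ℂ := (WithLp.equiv 2 _) x

lemma inner_eq_dot (x y : E m) : (inner ℂ x y : ℂ) = star (tf x) ⬝ᵥ tf y := by
  simp [tf, PiLp.inner_apply, dotProduct, RCLike.inner_apply, mul_comm]

lemma dot_sum {ι : Type*} [Fintype ι] (v : Fin m → ℂ) (f : ι → Fin m → ℂ) :
    v ⬝ᵥ (∑ i, f i) = ∑ i, v ⬝ᵥ f i := by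
  simp only [dotProduct, Finset.sum_apply, Finset.mul_sum]
  rw [Finset.sum_comm]

lemma Qexpand (X : Matrix (Fin m) (Fin m) ℂ) (b : OrthonormalBasis (Fin m) ℂ (E m))
    (μ : Fin m → ℝ) (hXb : ∀ i, X *ᵥ tf (b i) = (μ i : ℂ) • tf (b i)) (x : E m) :
    (star (tf x) ⬝ᵥ X *ᵥ tf x).re = ∑ i, μ i * ‖(inner ℂ (b i) x : ℂ)‖ ^ 2 := by
  have hx : ∑ i, (inner ℂ (b i) x : ℂ) • b i = x := by
    simpa [OrthonormalBasis.repr_apply_apply] using b.sum_repr x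
  have htf : tf x = ∑ i, (inner ℂ (b i) x : ℂ) • tf (b i) := by
    conv_lhs => rw [← hx]
    simp [tf]
  have hXx : X *ᵥ tf x = ∑ i, ((μ i : ℂ) * (inner ℂ (b i) x : ℂ)) • tf (b i) := by
    rw [htf]
    have h1 : X *ᵥ (∑ i, (inner ℂ (b i) x : ℂ) • tf (b i))
        = ∑ i, (inner ℂ (b i) x : ℂ) • (X *ᵥ tf (b i)) := by
      simpa only [mulVecLin_apply, mulVec_smul] using
        map_sum X.mulVecLin (fun i => (inner ℂ (b i) x : ℂ) • tf (b i)) univ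
    rw [h1]
    exact Finset.sum_congr rfl fun i _ => by rw [hXb i]; rw [smul_smul, mul_comm]
  have key : star (tf x) ⬝ᵥ X *ᵥ tf x
      = ∑ i, (μ i : ℂ) * ((inner ℂ (b i) x : ℂ) * (starRingEnd ℂ) (inner ℂ (b i) x)) := by
    rw [hXx]
    rw [dot_sum]
    simp_rw [dotProduct_smul, smul_eq_mul]
    refine Finset.sum_congr rfl fun i _ => ?_
    rw [← inner_eq_dot, ← inner_conj_symm x (b i)]
    ring
  rw [key, Complex.re_sum]
  refine Finset.sum_congr rfl fun i _ => ?_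
  rw [Complex.mul_conj, ← Complex.ofReal_mul, Complex.ofReal_re, Complex.normSq_eq_norm_sq]

set_option maxHeartbeats 1600000 in
lemma key (X : Matrix (Fin m) (Fin m) ℂ) (Y : Matrix (Fin p) (Fin p) ℂ)
    (w : OrthonormalBasis (Fin m) ℂ (E m)) (v : OrthonormalBasis (Fin p) ℂ (E p))
    (μ : Fin m → ℝ) (ν : Fin p → ℝ) (hμ : Monotone μ) (hν : Monotone ν)
    (hXw : ∀ i, X *ᵥ tf (w i) = (μ i : ℂ) • tf (w i))
    (hYv : ∀ i, Y *ᵥ tf (v i) = (ν i : ℂ) • tf (v i))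
    (L : (Fin p → ℂ) →ₗ[ℂ] (Fin m → ℂ)) (hL : Function.Injective L)
    (hQ : ∀ u : Fin p → ℂ, (star (L u) ⬝ᵥ X *ᵥ (L u)).re ≤ (star u ⬝ᵥ Y *ᵥ u).re)
    (hN : ∀ u : Fin p → ℂ, (star u ⬝ᵥ u).re ≤ (star (L u) ⬝ᵥ (L u)).re)
    (j : Fin p) (jm : (j : ℕ) < m) (hνj : 0 ≤ ν j) :
    μ ⟨j, jm⟩ ≤ ν j := by
  have hj1 : (j : ℕ) + 1 ≤ p := j.isLt
  have hj2 : (j : ℕ) ≤ m := le_of_lt jm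
  -- linear maps
  set T : (Fin ((j : ℕ) + 1) → ℂ) →ₗ[ℂ] E p :=
    { toFun := fun c => ∑ i, c i • (v (Fin.castLE hj1 i) : E p)
      map_add' := by intro a b; simp [add_smul, Finset.sum_add_distrib]
      map_smul' := by intro r a; simp [smul_smul, Finset.smul_sum] } with hT
  set G : E m →ₗ[ℂ] (Fin (j : ℕ) → ℂ) :=
    { toFun := fun x => fun i => (inner ℂ (w (Fin.castLE hj2 i)) x : ℂ)
      map_add' := by intro a b; funext i; simp [inner_add_right]
      map_smul' := by intro r a; funext i; simp [inner_smul_right] } with hG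
  set Φ : (Fin ((j : ℕ) + 1) → ℂ) →ₗ[ℂ] (Fin (j : ℕ) → ℂ) :=
    G ∘ₗ (WithLp.linearEquiv 2 ℂ (Fin m → ℂ)).symm.toLinearMap ∘ₗ L ∘ₗ
      (WithLp.linearEquiv 2 ℂ (Fin p → ℂ)).toLinearMap ∘ₗ T with hΦ
  -- kernel element
  have hnotinj : ¬ Function.Injective Φ := by
    intro hinj
    have := LinearMap.finrank_le_finrank_of_injective hinj
    simp [Module.finrank_fin_fun] at this
  obtain ⟨a, b, hab, hne⟩ := Function.not_injective_iff.1 hnotinj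
  set c := a - b with hc
  have hcne : c ≠ 0 := sub_ne_zero.2 hne
  have hΦc : Φ c = 0 := by rw [hc, map_sub, hab, sub_self]
  set u : E p := T c with hu
  have hvli : LinearIndependent ℂ (fun i : Fin ((j : ℕ) + 1) => (v (Fin.castLE hj1 i) : E p)) :=
    (v.orthonormal.comp _ (Fin.castLE_injective hj1)).linearIndependent
  have hune : u ≠ 0 := by
    intro h
    exact hcne (funext (Fintype.linearIndependent_iff.1 hvli c (by simpa [hu, hT] using h)))
  set ufun : Fin p → ℂ := tf u with hufun
  set xfun : Fin m → ℂ := L ufun with hxfun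
  set x : E m := (WithLp.equiv 2 (Fin m → ℂ)).symm xfun with hx
  have htfx : tf x = xfun := rfl
  have hxne : x ≠ 0 := by
    intro h
    apply hune
    have : xfun = 0 := by
      simpa [hx] using congrArg (WithLp.equiv 2 (Fin m → ℂ)) h
    have h0 : ufun = 0 := hL (by simpa [hxfun] using this)
    exact (WithLp.equiv 2 (Fin p → ℂ)).injective (by simpa [hufun, tf] using h0)
  -- vanishing coordinates
  have hd0 : ∀ i : Fin m, (i : ℕ) < (j : ℕ) → (inner ℂ (w i) x : ℂ) = 0 := by
    intro i hi
    have := congrFun hΦc ⟨(i : ℕ), hi⟩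
    simpa [hΦ, hG, hx, hxfun, hufun, hu, tf, Fin.castLE, Fin.eta] using this
  have hc'0 : ∀ i : Fin p, (j : ℕ) < (i : ℕ) → (inner ℂ (v i) u : ℂ) = 0 := by
    intro i hi
    rw [hu]
    show (inner ℂ (v i) (∑ k, c k • (v (Fin.castLE hj1 k) : E p)) : ℂ) = 0
    rw [inner_sum]
    refine Finset.sum_eq_zero fun k _ => ?_
    have hk := k.isLt
    rw [inner_smul_right, v.orthonormal.2 (fun h => by
      have hk2 := congrArg Fin.val h
      simp only [Fin.coe_castLE] at hk2
      omega), mul_zero]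
  -- quadratic expansions
  have hQx : (star xfun ⬝ᵥ X *ᵥ xfun).re = ∑ i, μ i * ‖(inner ℂ (w i) x : ℂ)‖ ^ 2 := by
    rw [← htfx]; exact Qexpand X w μ hXw x
  have hQu : (star ufun ⬝ᵥ Y *ᵥ ufun).re = ∑ i, ν i * ‖(inner ℂ (v i) u : ℂ)‖ ^ 2 :=
    Qexpand Y v ν hYv u
  have hNx : (star xfun ⬝ᵥ xfun).re = ∑ i, ‖(inner ℂ (w i) x : ℂ)‖ ^ 2 := by
    have := Qexpand (1 : Matrix (Fin m) (Fin m) ℂ) w (fun _ => 1) (fun i => by simp) x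
    simpa [htfx] using this
  have hNu : (star ufun ⬝ᵥ ufun).re = ∑ i, ‖(inner ℂ (v i) u : ℂ)‖ ^ 2 := by
    have := Qexpand (1 : Matrix (Fin p) (Fin p) ℂ) v (fun _ => 1) (fun i => by simp) u
    simpa using this
  -- positivity of Nx
  have hNxpos : 0 < ∑ i, ‖(inner ℂ (w i) x : ℂ)‖ ^ 2 := by
    have hex : ∃ i, (inner ℂ (w i) x : ℂ) ≠ 0 := by
      by_contra h
      push_neg at h
      apply hxne
      have := w.sum_repr x
      simp_rw [OrthonormalBasis.repr_apply_apply, h, zero_smul, Finset.sum_const_zero] at this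
      exact this.symm
    obtain ⟨i0, hi0⟩ := hex
    refine Finset.sum_pos' (fun i _ => by positivity) ⟨i0, Finset.mem_univ _, pow_pos (norm_pos_iff.2 hi0) 2⟩
  -- chain
  have h1 : μ ⟨j, jm⟩ * ∑ i, ‖(inner ℂ (w i) x : ℂ)‖ ^ 2 ≤ ∑ i, μ i * ‖(inner ℂ (w i) x : ℂ)‖ ^ 2 := by
    rw [Finset.mul_sum]
    refine Finset.sum_le_sum fun i _ => ?_
    rcases lt_or_ge (i : ℕ) (j : ℕ) with hlt | hge
    · rw [hd0 i hlt]; simp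
    · exact mul_le_mul_of_nonneg_right (hμ (Fin.le_def.mpr hge)) (by positivity)
  have h2 : ∑ i, ν i * ‖(inner ℂ (v i) u : ℂ)‖ ^ 2 ≤ ν j * ∑ i, ‖(inner ℂ (v i) u : ℂ)‖ ^ 2 := by
    rw [Finset.mul_sum]
    refine Finset.sum_le_sum fun i _ => ?_
    rcases lt_or_ge (j : ℕ) (i : ℕ) with hlt | hge
    · rw [hc'0 i hlt]; simp
    · exact mul_le_mul_of_nonneg_right (hν (Fin.le_def.mpr hge)) (by positivity)
  have h3 : ν j * ∑ i, ‖(inner ℂ (v i) u : ℂ)‖ ^ 2 ≤ ν j * ∑ i, ‖(inner ℂ (w i) x : ℂ)‖ ^ 2 := by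
    apply mul_le_mul_of_nonneg_left _ hνj
    rw [← hNx, ← hNu]
    exact hN ufun
  have hchain : μ ⟨j, jm⟩ * ∑ i, ‖(inner ℂ (w i) x : ℂ)‖ ^ 2
      ≤ ν j * ∑ i, ‖(inner ℂ (w i) x : ℂ)‖ ^ 2 := by
    calc μ ⟨j, jm⟩ * ∑ i, ‖(inner ℂ (w i) x : ℂ)‖ ^ 2
        ≤ ∑ i, μ i * ‖(inner ℂ (w i) x : ℂ)‖ ^ 2 := h1
      _ = (star xfun ⬝ᵥ X *ᵥ xfun).re := hQx.symm
      _ ≤ (star ufun ⬝ᵥ Y *ᵥ ufun).re := by rw [hxfun]; exact hQ ufun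
      _ = ∑ i, ν i * ‖(inner ℂ (v i) u : ℂ)‖ ^ 2 := hQu
      _ ≤ ν j * ∑ i, ‖(inner ℂ (v i) u : ℂ)‖ ^ 2 := h2
      _ ≤ ν j * ∑ i, ‖(inner ℂ (w i) x : ℂ)‖ ^ 2 := h3
  nlinarith [hchain, hNxpos]

lemma mono_sortedEigs {X : Matrix (Fin m) (Fin m) ℂ} (hX : X.IsHermitian) :
    Monotone (sortedEigs hX) :=
  Tuple.monotone_sort hX.eigenvalues

lemma sortedEigs_pos {X : Matrix (Fin m) (Fin m) ℂ} (hX : X.PosDef) (i : Fin m) :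
    0 < sortedEigs hX.1 i :=
  hX.eigenvalues_pos _

lemma exists_sorted_basis {X : Matrix (Fin m) (Fin m) ℂ} (hX : X.IsHermitian) :
    ∃ w : OrthonormalBasis (Fin m) ℂ (E m),
      ∀ i, X *ᵥ tf (w i) = ((sortedEigs hX i : ℝ) : ℂ) • tf (w i) := by
  refine ⟨hX.eigenvectorBasis.reindex (Tuple.sort hX.eigenvalues).symm, fun i => ?_⟩
  rw [OrthonormalBasis.reindex_apply, Equiv.symm_symm]
  have h := hX.mulVec_eigenvectorBasis (Tuple.sort hX.eigenvalues i)
  have h2 : ((sortedEigs hX i : ℝ) : ℂ) • tf (hX.eigenvectorBasis (Tuple.sort hX.eigenvalues i))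
      = hX.eigenvalues (Tuple.sort hX.eigenvalues i) •
        tf (hX.eigenvectorBasis (Tuple.sort hX.eigenvalues i)) := by
    funext r
    simp [sortedEigs, Pi.smul_apply, Complex.real_smul, tf]
  rw [h2]
  exact h

lemma key' {X : Matrix (Fin m) (Fin m) ℂ} {Y : Matrix (Fin p) (Fin p) ℂ}
    (hX : X.IsHermitian) (hY : Y.IsHermitian)
    (L : (Fin p → ℂ) →ₗ[ℂ] (Fin m → ℂ)) (hL : Function.Injective L)
    (hQ : ∀ u : Fin p → ℂ, (star (L u) ⬝ᵥ X *ᵥ (L u)).re ≤ (star u ⬝ᵥ Y *ᵥ u).re)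
    (hN : ∀ u : Fin p → ℂ, (star u ⬝ᵥ u).re ≤ (star (L u) ⬝ᵥ (L u)).re)
    (j : Fin p) (jm : (j : ℕ) < m) (hνj : 0 ≤ sortedEigs hY j) :
    sortedEigs hX ⟨j, jm⟩ ≤ sortedEigs hY j := by
  obtain ⟨w, hw⟩ := exists_sorted_basis hX
  obtain ⟨v, hv⟩ := exists_sorted_basis hY
  exact key X Y w v _ _ (mono_sortedEigs hX) (mono_sortedEigs hY) hw hv L hL hQ hN j jm hνj

lemma sorted_unique {X : Matrix (Fin m) (Fin m) ℂ} (hXpd : X.PosDef)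
    (w : OrthonormalBasis (Fin m) ℂ (E m)) (μ : Fin m → ℝ) (hμ : Monotone μ)
    (hμpos : ∀ i, 0 < μ i)
    (hXw : ∀ i, X *ᵥ tf (w i) = ((μ i : ℝ) : ℂ) • tf (w i)) :
    sortedEigs hXpd.1 = μ := by
  obtain ⟨ws, hws⟩ := exists_sorted_basis hXpd.1
  funext j
  have e1 : sortedEigs hXpd.1 ⟨(j : ℕ), j.isLt⟩ = sortedEigs hXpd.1 j := by congr 1
  have e2 : μ ⟨(j : ℕ), j.isLt⟩ = μ j := by congr 1
  refine le_antisymm ?_ ?_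
  · have := key X X ws w (sortedEigs hXpd.1) μ (mono_sortedEigs hXpd.1) hμ hws hXw
      LinearMap.id (fun a b h => h) (fun u => by simp) (fun u => by simp) j j.isLt
      (le_of_lt (hμpos j))
    rwa [e1] at this
  · have := key X X w ws μ (sortedEigs hXpd.1) hμ (mono_sortedEigs hXpd.1) hXw hws
      LinearMap.id (fun a b h => h) (fun u => by simp) (fun u => by simp) j j.isLt
      (le_of_lt (sortedEigs_pos hXpd j))
    rwa [e2] at this

lemma sortedEigs_inv {X : Matrix (Fin m) (Fin m) ℂ} (hX : X.PosDef) (j : Fin m) :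
    sortedEigs hX.inv.1 j = (sortedEigs hX.1 j.rev)⁻¹ := by
  obtain ⟨w, hw⟩ := exists_sorted_basis hX.1
  have spos : ∀ i, 0 < sortedEigs hX.1 i := sortedEigs_pos hX
  set μ : Fin m → ℝ := fun i => (sortedEigs hX.1 i.rev)⁻¹ with hμdef
  have hμmono : Monotone μ := by
    intro a b hab
    have h1 : b.rev ≤ a.rev := Fin.rev_le_rev.mpr hab
    exact inv_anti₀ (spos _) (mono_sortedEigs hX.1 h1)
  have hμpos : ∀ i, 0 < μ i := fun i => inv_pos.2 (spos _)
  have hdet : IsUnit X.det := (Matrix.isUnit_iff_isUnit_det X).mp hX.isUnit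
  have hXinv : X⁻¹ * X = 1 := Matrix.nonsing_inv_mul X hdet
  set w' := w.reindex (Fin.revPerm : Equiv.Perm (Fin m)) with hw'def
  have heig : ∀ i, X⁻¹ *ᵥ tf (w' i) = ((μ i : ℝ) : ℂ) • tf (w' i) := by
    intro i
    have hrw : w' i = w i.rev := by
      rw [hw'def, OrthonormalBasis.reindex_apply]
      congr 1
    rw [hrw]
    have h1 := hw i.rev
    have hz : X⁻¹ *ᵥ (X *ᵥ tf (w i.rev)) = tf (w i.rev) := by
      rw [Matrix.mulVec_mulVec, hXinv, Matrix.one_mulVec]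
    rw [h1, Matrix.mulVec_smul] at hz
    have hcne : ((sortedEigs hX.1 i.rev : ℝ) : ℂ) ≠ 0 := by
      exact_mod_cast (spos i.rev).ne'
    have := congrArg (fun z => ((sortedEigs hX.1 i.rev : ℝ) : ℂ)⁻¹ • z) hz
    simp only [smul_smul, inv_mul_cancel₀ hcne, one_smul] at this
    rw [this, hμdef]
    push_cast
    rfl
  have := sorted_unique hX.inv w' μ hμmono hμpos heig
  exact congrFun this j

lemma re_star_dot_nonneg {ι : Type*} [Fintype ι] (v : ι → ℂ) : 0 ≤ (star v ⬝ᵥ v).re := by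
  rw [dotProduct, Complex.re_sum]
  refine Finset.sum_nonneg fun i _ => ?_
  rw [Pi.star_apply, RCLike.star_def, mul_comm, Complex.mul_conj]
  exact_mod_cast Complex.normSq_nonneg _

lemma dot_reindex {ι κ : Type*} [Fintype ι] [Fintype κ] (C : Matrix κ κ ℂ) (e : ι ≃ κ)
    (y : κ → ℂ) :
    star (y ∘ e) ⬝ᵥ (C.submatrix e e) *ᵥ (y ∘ e) = star y ⬝ᵥ C *ᵥ y := by
  rw [Matrix.submatrix_mulVec_equiv]
  have h1 : (y ∘ ⇑e) ∘ ⇑e.symm = y := by funext i; simp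
  rw [h1]
  have h2 : star (y ∘ ⇑e) = (star y) ∘ ⇑e := rfl
  rw [h2, dotProduct, dotProduct]
  exact Equiv.sum_comp e fun k => star y k * (C *ᵥ y) k

lemma star_dot_reindex {ι κ : Type*} [Fintype ι] [Fintype κ] (e : ι ≃ κ) (y : κ → ℂ) :
    star (y ∘ e) ⬝ᵥ (y ∘ e) = star y ⬝ᵥ y := by
  have h2 : star (y ∘ ⇑e) = (star y) ∘ ⇑e := rfl
  rw [h2, dotProduct, dotProduct]
  exact Equiv.sum_comp e fun k => star y k * y k

/-- the linear map `u ↦ (u ⊕ᵥ W *ᵥ u) ∘ finSumFinEquiv.symm`. -/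
def elimL (n : ℕ) (W : Matrix (Fin n) (Fin n) ℂ) : (Fin n → ℂ) →ₗ[ℂ] (Fin (n + n) → ℂ) where
  toFun u := (u ⊕ᵥ (W *ᵥ u)) ∘ finSumFinEquiv.symm
  map_add' a b := by
    funext i
    simp only [Function.comp_apply, Matrix.mulVec_add, Pi.add_apply]
    cases finSumFinEquiv.symm i <;> simp
  map_smul' r a := by
    funext i
    simp only [Function.comp_apply, Matrix.mulVec_smul, RingHom.id_apply, Pi.smul_apply]
    cases finSumFinEquiv.symm i <;> simp

lemma elimL_apply (n : ℕ) (W : Matrix (Fin n) (Fin n) ℂ) (u : Fin n → ℂ) :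
    elimL n W u = (u ⊕ᵥ (W *ᵥ u)) ∘ finSumFinEquiv.symm := rfl

lemma elimL_inj (n : ℕ) (W : Matrix (Fin n) (Fin n) ℂ) : Function.Injective (elimL n W) := by
  intro a b h
  funext i
  have := congrFun h (finSumFinEquiv (Sum.inl i))
  simpa [elimL_apply] using this

end Interlace


end
end Aux

open Interlace

set_option maxHeartbeats 1600000

theorem stmt_12 (n : ℕ) (M N P : Matrix (Fin n) (Fin n) ℂ)
    (hMh : M.IsHermitian) (hPh : P.IsHermitian)
    (A : Matrix (Fin (n + n)) (Fin (n + n)) ℂ)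
    (hAdef : A = (Matrix.fromBlocks M N Nᴴ P).submatrix finSumFinEquiv.symm finSumFinEquiv.symm)
    (hA : A.PosDef) :
    ∃ hS : (M - N * P⁻¹ * Nᴴ).PosDef,
      ∀ k : Fin n,
        sortedEigs hA.1 (Fin.castAdd n k) ≤ sortedEigs hS.1 k ∧
        sortedEigs hS.1 k ≤ sortedEigs hA.1 (Fin.natAdd n k) := by
  classical
  set e := (finSumFinEquiv : Fin n ⊕ Fin n ≃ Fin (n + n)) with he
  set B := Matrix.fromBlocks M N Nᴴ P with hBdef
  -- B is positive definite
  have hB : B.PosDef := by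
    refine Matrix.posDef_iff_dotProduct_mulVec.mpr ⟨?_, ?_⟩
    · exact (Matrix.isHermitian_submatrix_equiv e.symm).mp (hAdef ▸ hA.1)
    · intro y hy
      have hx : (y ∘ ⇑e.symm) ≠ 0 := by
        intro h
        apply hy
        funext s
        have := congrFun h (e s)
        simpa using this
      have h2 := hA.dotProduct_mulVec_pos hx
      rwa [hAdef, dot_reindex B e.symm y] at h2
  -- P is positive definite
  have hP : P.PosDef := by
    refine Matrix.PosDef.of_dotProduct_mulVec_pos hPh fun v hv => ?_
    have h0 : (Sum.elim 0 v : Fin n ⊕ Fin n → ℂ) ≠ 0 := by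
      intro h
      exact hv (funext fun i => congrFun h (Sum.inr i))
    have h2 := hB.dotProduct_mulVec_pos h0
    rw [hBdef, Function.star_sumElim] at h2
    rw [Matrix.fromBlocks_mulVec, sumElim_dotProduct_sumElim] at h2
    simpa using h2
  letI : Invertible P := hP.isUnit.invertible
  have hPinv : (⅟P : Matrix (Fin n) (Fin n) ℂ) = P⁻¹ := invOf_eq_nonsing_inv P
  set S := M - N * P⁻¹ * Nᴴ with hSdef
  set W := -(P⁻¹ * Nᴴ) with hWdef
  -- the graph quadratic identity
  have quad : ∀ u : Fin n → ℂ,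
      star (u ⊕ᵥ (W *ᵥ u)) ⬝ᵥ B *ᵥ (u ⊕ᵥ (W *ᵥ u)) = star u ⬝ᵥ S *ᵥ u := by
    intro u
    have h := Matrix.schur_complement_eq₂₂ M N u (W *ᵥ u) hPh
    have hcancel : (P⁻¹ * Nᴴ) *ᵥ u + W *ᵥ u = 0 := by
      rw [hWdef, Matrix.neg_mulVec, add_neg_cancel]
    rw [hcancel] at h
    simp only [star_zero, Matrix.zero_vecMul, zero_dotProduct, zero_add] at h
    rw [Matrix.dotProduct_mulVec, hBdef, h, ← Matrix.dotProduct_mulVec, hSdef]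
  -- S is positive definite
  have hSh : S.IsHermitian := by
    refine hMh.sub ?_
    have := Matrix.isHermitian_conjTranspose_mul_mul Nᴴ hPh.inv
    simpa using this
  have hS : S.PosDef := by
    refine Matrix.PosDef.of_dotProduct_mulVec_pos hSh fun u hu => ?_
    have h0 : (u ⊕ᵥ (W *ᵥ u)) ≠ 0 := by
      intro h
      exact hu (funext fun i => congrFun h (Sum.inl i))
    have h2 := hB.dotProduct_mulVec_pos h0
    rwa [quad u] at h2
  refine ⟨hS, fun k => ?_⟩
  have hApos := Interlace.sortedEigs_pos hA
  have hSpos := Interlace.sortedEigs_pos hS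
  constructor
  · -- lower bound via the graph map
    set L₁ := elimL n W with hL₁
    have hQ₁ : ∀ u : Fin n → ℂ,
        (star (L₁ u) ⬝ᵥ A *ᵥ (L₁ u)).re ≤ (star u ⬝ᵥ S *ᵥ u).re := by
      intro u
      apply le_of_eq
      congr 1
      rw [hL₁, elimL_apply, hAdef, dot_reindex B e.symm (u ⊕ᵥ (W *ᵥ u)), quad u]
    have hN₁ : ∀ u : Fin n → ℂ, (star u ⬝ᵥ u).re ≤ (star (L₁ u) ⬝ᵥ (L₁ u)).re := by
      intro u
      rw [hL₁, elimL_apply, star_dot_reindex e.symm, Function.star_sumElim,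
        sumElim_dotProduct_sumElim, Complex.add_re]
      exact le_add_of_nonneg_right (re_star_dot_nonneg _)
    have jm : (k : ℕ) < n + n := by omega
    have h := key' hA.1 hS.1 L₁ (elimL_inj n W) hQ₁ hN₁ k jm (hSpos k).le
    have hcast : Fin.castAdd n k = (⟨(k : ℕ), jm⟩ : Fin (n + n)) := by
      apply Fin.ext; rfl
    rwa [hcast]
  · -- upper bound via the inverse trick
    letI : Invertible B := hB.isUnit.invertible
    have hPS : M - N * ⅟P * Nᴴ = S := by rw [hPinv, hSdef]
    letI : Invertible (M - N * ⅟P * Nᴴ) := hPS ▸ hS.isUnit.invertible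
    have hBinv : B⁻¹ = Matrix.fromBlocks S⁻¹ (-(S⁻¹ * N * P⁻¹)) (-(P⁻¹ * Nᴴ * S⁻¹))
        (P⁻¹ + P⁻¹ * Nᴴ * S⁻¹ * N * P⁻¹) := by
      have h1 := Matrix.invOf_fromBlocks₂₂_eq M N Nᴴ P
      rw [invOf_eq_nonsing_inv, invOf_eq_nonsing_inv (M - N * ⅟P * Nᴴ), hPS, hPinv] at h1
      rw [hBdef, h1]
    have hAinv : A⁻¹ = B⁻¹.submatrix ⇑e.symm ⇑e.symm := by
      rw [hAdef]
      exact Matrix.inv_submatrix_equiv B e.symm e.symm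
    have quadinv : ∀ u : Fin n → ℂ,
        star (u ⊕ᵥ ((0 : Matrix (Fin n) (Fin n) ℂ) *ᵥ u)) ⬝ᵥ B⁻¹ *ᵥ
          (u ⊕ᵥ ((0 : Matrix (Fin n) (Fin n) ℂ) *ᵥ u)) = star u ⬝ᵥ S⁻¹ *ᵥ u := by
      intro u
      rw [hBinv, Matrix.zero_mulVec, Function.star_sumElim, Matrix.fromBlocks_mulVec,
        sumElim_dotProduct_sumElim]
      simp
    set L₂ := elimL n (0 : Matrix (Fin n) (Fin n) ℂ) with hL₂
    have hQ₂ : ∀ u : Fin n → ℂ,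
        (star (L₂ u) ⬝ᵥ A⁻¹ *ᵥ (L₂ u)).re ≤ (star u ⬝ᵥ S⁻¹ *ᵥ u).re := by
      intro u
      apply le_of_eq
      congr 1
      rw [hL₂, elimL_apply, hAinv, dot_reindex B⁻¹ e.symm _, quadinv u]
    have hN₂ : ∀ u : Fin n → ℂ, (star u ⬝ᵥ u).re ≤ (star (L₂ u) ⬝ᵥ (L₂ u)).re := by
      intro u
      rw [hL₂, elimL_apply, star_dot_reindex e.symm, Function.star_sumElim,
        sumElim_dotProduct_sumElim, Complex.add_re]
      exact le_add_of_nonneg_right (re_star_dot_nonneg _)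
    have jm : ((k.rev : Fin n) : ℕ) < n + n := by
      have := k.rev.isLt; omega
    have h := key' (hA.inv).1 (hS.inv).1 L₂ (elimL_inj n 0) hQ₂ hN₂ k.rev jm
      (Interlace.sortedEigs_pos hS.inv k.rev).le
    rw [Interlace.sortedEigs_inv hA, Interlace.sortedEigs_inv hS, Fin.rev_rev] at h
    have hidx : (⟨((k.rev : Fin n) : ℕ), jm⟩ : Fin (n + n)).rev = Fin.natAdd n k := by
      apply Fin.ext
      have h1 := k.isLt
      simp [Fin.val_rev]
      omega
    rw [hidx] at h
    have ha := hApos (Fin.natAdd n k)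
    have hs := hSpos k
    exact (inv_le_inv₀ ha hs).mp h
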